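/- Let H_A, H_B be Hilbert spaces, A₀, A₁ unitaries on H_A and B₀, B₁ unitaries on H_B, all satisfying X^d = I, and let O_d = ∑_{k=1}^{d−1} (r_k A₀^k ⊗ B₀^{−k} + conj(r_k) ω^k A₀^k ⊗ B₁^{−k} + conj(r_k) A₁^k ⊗ B₀^{−k} + r_k A₁^k ⊗ B₁^{−k}) be the SATWAP Bell operator. Then O_d = 2(d−1)·I − (1/2)∑_{k=1}^{d−1}(M_{0,k} M_{0,k}† + M_{1,k} M_{1,k}†), where M_{s,k} = A_s^k ⊗ I − I ⊗ C_{s,k}†, with C_{0,k} = r_k B₀^{−k} + conj(r_k)ω^k B₁^{−k} and C_{1,k} = conj(r_k) B₀^{−k} + r_k B₁^{−k}. Consequently, for every unit vector |ψ⟩ ∈ H_A ⊗ H_B, ⟨ψ|O_d|ψ⟩ ≤ 2(d−1), with equality iff M_{s,k}†|ψ⟩ = 0 for all s ∈ {0,1}, 1 ≤ k ≤ d−1. -/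

import Mathlib

open Complex Matrix Kronecker


private lemma kron_star {m n : ℕ} (X : Matrix (Fin m) (Fin m) ℂ) (Y : Matrix (Fin n) (Fin n) ℂ) :
    star (X ⊗ₖ Y) = star X ⊗ₖ star Y := by
  ext ⟨i, j⟩ ⟨i', j'⟩
  simp [Matrix.star_apply, Matrix.kroneckerMap_apply, star_mul', mul_comm]

private lemma pow_star_mul_self {N : ℕ} {X : Matrix (Fin N) (Fin N) ℂ}
    (hX : X ∈ Matrix.unitaryGroup (Fin N) ℂ) (k : ℕ) :
    X ^ k * star (X ^ k) = 1 ∧ star (X ^ k) * X ^ k = 1 := by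
  have h : X ^ k ∈ Matrix.unitaryGroup (Fin N) ℂ := pow_mem hX k
  exact ⟨Matrix.mem_unitaryGroup_iff.mp h, Matrix.mem_unitaryGroup_iff'.mp h⟩

private lemma star_pow_eq_pow_sub {N d : ℕ} {X : Matrix (Fin N) (Fin N) ℂ}
    (hX : X ∈ Matrix.unitaryGroup (Fin N) ℂ) (hXd : X ^ d = 1) {k : ℕ} (hk : k ≤ d) :
    star (X ^ k) = X ^ (d - k) := by
  have h1 := (pow_star_mul_self hX k).2
  have hpow : X ^ k * X ^ (d - k) = 1 := by
    rw [← pow_add, Nat.add_sub_cancel' hk, hXd]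
  calc star (X ^ k) = star (X ^ k) * (X ^ k * X ^ (d - k)) := by rw [hpow, mul_one]
    _ = (star (X ^ k) * X ^ k) * X ^ (d - k) := by rw [mul_assoc]
    _ = X ^ (d - k) := by rw [h1, one_mul]

private lemma conj_arg (d k : ℕ) :
    (starRingEnd ℂ) (2 * (Real.pi : ℂ) * I * (2 * (k : ℂ) - d) / (8 * d)) =
      -(2 * (Real.pi : ℂ) * I * (2 * (k : ℂ) - d) / (8 * d)) := by
  simp only [map_div₀, _root_.map_mul, map_sub, map_ofNat, map_natCast,
    Complex.conj_I, Complex.conj_ofReal]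
  ring

private lemma star_r {d : ℕ} {r : ℕ → ℂ} (hr : ∀ k, r k = (1 / Real.sqrt 2) *
      Complex.exp (2 * Real.pi * I * (2 * (k : ℂ) - d) / (8 * d))) (k : ℕ) :
    star (r k) = (1 / Real.sqrt 2) *
      Complex.exp (-(2 * (Real.pi : ℂ) * I * (2 * (k : ℂ) - d) / (8 * d))) := by
  rw [hr k, star_mul', RCLike.star_def, ← Complex.exp_conj, conj_arg d k,
    show (starRingEnd ℂ) (1 / (Real.sqrt 2 : ℂ)) = 1 / (Real.sqrt 2 : ℂ) from by
      simp [map_div₀, Complex.conj_ofReal]]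

private lemma sqrt2_sq : ((Real.sqrt 2 : ℝ) : ℂ) * ((Real.sqrt 2 : ℝ) : ℂ) = 2 := by
  norm_cast
  exact Real.mul_self_sqrt (by norm_num)

private lemma star_r_mul_r {d : ℕ} {r : ℕ → ℂ} (hr : ∀ k, r k = (1 / Real.sqrt 2) *
      Complex.exp (2 * Real.pi * I * (2 * (k : ℂ) - d) / (8 * d))) (k : ℕ) :
    star (r k) * r k = 1 / 2 := by
  rw [star_r hr k, hr k]
  rw [show ((1:ℂ) / Real.sqrt 2) * Complex.exp (-(2 * (Real.pi:ℂ) * I * (2 * (k:ℂ) - d) / (8 * d))) *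
      ((1 / Real.sqrt 2) * Complex.exp (2 * (Real.pi:ℂ) * I * (2 * (k:ℂ) - d) / (8 * d))) =
      ((1:ℂ) / Real.sqrt 2) * (1 / Real.sqrt 2) *
        (Complex.exp (-(2 * (Real.pi:ℂ) * I * (2 * (k:ℂ) - d) / (8 * d))) *
         Complex.exp (2 * (Real.pi:ℂ) * I * (2 * (k:ℂ) - d) / (8 * d))) from by ring]
  rw [← Complex.exp_add, neg_add_cancel, Complex.exp_zero, mul_one]
  have h2 := sqrt2_sq
  have hne : ((Real.sqrt 2 : ℝ) : ℂ) ≠ 0 := by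
    intro h
    rw [h, mul_zero] at h2
    norm_num at h2
  field_simp
  linear_combination -h2

private lemma key0 {d : ℕ} (hd : 2 ≤ d) {ω : ℂ} (hω : ω = Complex.exp (2 * Real.pi * I / d))
    {r : ℕ → ℂ} (hr : ∀ k, r k = (1 / Real.sqrt 2) *
      Complex.exp (2 * Real.pi * I * (2 * (k : ℂ) - d) / (8 * d))) (k : ℕ) :
    r k ^ 2 + star (r k) ^ 2 * ω ^ k = 0 := by
  have hd0' : (d : ℂ) ≠ 0 := Nat.cast_ne_zero.mpr (by omega)
  rw [star_r hr k, hr k, hω, ← Complex.exp_nat_mul]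
  set z : ℂ := 2 * (Real.pi : ℂ) * I * (2 * (k : ℂ) - d) / (8 * d) with hz
  have harg : -(2*z) + (k : ℂ) * (2 * (Real.pi:ℂ) * I / d) = 2*z + Real.pi * I := by
    rw [hz]; field_simp; ring
  have eexp : ∀ w : ℂ, Complex.exp w ^ 2 = Complex.exp (2 * w) := fun w => by
    rw [sq, ← Complex.exp_add, two_mul]
  have e1 : ((1:ℂ) / Real.sqrt 2 * Complex.exp z) ^ 2 = ((1:ℂ)/Real.sqrt 2)^2 * Complex.exp (2*z) := by
    rw [mul_pow, eexp]
  have e2 : ((1:ℂ) / Real.sqrt 2 * Complex.exp (-z)) ^ 2 = ((1:ℂ)/Real.sqrt 2)^2 * Complex.exp (-(2*z)) := by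
    rw [mul_pow, eexp, show (2 : ℂ) * -z = -(2*z) from by ring]
  rw [e1, e2, mul_assoc, ← Complex.exp_add, harg, Complex.exp_add, Complex.exp_pi_mul_I]
  ring

private lemma key1 {d : ℕ} (hd : 2 ≤ d) {ω : ℂ} (hω : ω = Complex.exp (2 * Real.pi * I / d))
    {r : ℕ → ℂ} (hr : ∀ k, r k = (1 / Real.sqrt 2) *
      Complex.exp (2 * Real.pi * I * (2 * (k : ℂ) - d) / (8 * d))) (k : ℕ) :
    star (r k) ^ 2 + r k ^ 2 * star ω ^ k = 0 := by
  have h := congrArg star (key0 hd hω hr k)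
  simp only [star_add, star_mul', star_pow, star_star, star_zero] at h
  linear_combination h

private lemma omega_pow_d {d : ℕ} (hd : 2 ≤ d) {ω : ℂ}
    (hω : ω = Complex.exp (2 * Real.pi * I / d)) : ω ^ d = 1 := by
  have hd0' : (d : ℂ) ≠ 0 := Nat.cast_ne_zero.mpr (by omega)
  rw [hω, ← Complex.exp_nat_mul,
    show (d : ℂ) * (2 * (Real.pi:ℂ) * I / d) = 2 * Real.pi * I from by field_simp,
    Complex.exp_two_pi_mul_I]

private lemma star_omega_mul {d : ℕ} {ω : ℂ}
    (hω : ω = Complex.exp (2 * Real.pi * I / d)) : star ω * ω = 1 := by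
  rw [hω, RCLike.star_def, ← Complex.exp_conj, ← Complex.exp_add]
  rw [show (starRingEnd ℂ) (2 * (Real.pi:ℂ) * I / d) + 2 * (Real.pi:ℂ) * I / d = 0 from by
    simp only [map_div₀, _root_.map_mul, Complex.conj_I, Complex.conj_ofReal, map_ofNat,
      map_natCast]
    ring]
  exact Complex.exp_zero

private lemma star_omega_pow {d : ℕ} (hd : 2 ≤ d) {ω : ℂ}
    (hω : ω = Complex.exp (2 * Real.pi * I / d)) {k : ℕ} (hk : k ≤ d) :
    star ω ^ k = ω ^ (d - k) := by
  have h1 : star ω ^ k * ω ^ k = 1 := by rw [← mul_pow, star_omega_mul hω, one_pow]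
  have h2 : ω ^ (d - k) * ω ^ k = 1 := by
    rw [← pow_add, Nat.sub_add_cancel hk, omega_pow_d hd hω]
  have hω0 : ω ≠ 0 := by rw [hω]; exact Complex.exp_ne_zero _
  exact mul_right_cancel₀ (pow_ne_zero _ hω0) (h1.trans h2.symm)

private lemma r_sub {d : ℕ} {r : ℕ → ℂ} (hr : ∀ k, r k = (1 / Real.sqrt 2) *
      Complex.exp (2 * Real.pi * I * (2 * (k : ℂ) - d) / (8 * d))) (k : ℕ) (hk : k ≤ d) :
    r (d - k) = star (r k) := by
  rw [hr (d - k), star_r hr k]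
  congr 2
  push_cast [Nat.cast_sub hk]
  ring

private lemma sum_mulVec {m : Type*} [Fintype m] [DecidableEq m] {ι : Type*} (s : Finset ι)
    (f : ι → Matrix m m ℂ) (v : m → ℂ) :
    (∑ k ∈ s, f k) *ᵥ v = ∑ k ∈ s, f k *ᵥ v := by
  induction s using Finset.cons_induction with
  | empty => simp [Matrix.zero_mulVec]
  | cons a s ha ih => rw [Finset.sum_cons, Finset.sum_cons, Matrix.add_mulVec, ih]

private lemma dotProduct_sum' {m : Type*} [Fintype m] {ι : Type*} (s : Finset ι)
    (u : m → ℂ) (f : ι → m → ℂ) :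
    u ⬝ᵥ (∑ k ∈ s, f k) = ∑ k ∈ s, u ⬝ᵥ f k := by
  induction s using Finset.cons_induction with
  | empty => simp
  | cons a s ha ih => rw [Finset.sum_cons, Finset.sum_cons, dotProduct_add, ih]

/-- Sum-of-squares decomposition of the SATWAP Bell operator and the resulting
bound `⟨ψ|O_d|ψ⟩ ≤ 2(d−1)` with its equality condition.  Operators are modelled as
matrices and `X^{−k}` is written `(star X)^k` since all of `A₀,A₁,B₀,B₁` are unitary. -/
theorem satwap_sos_decomposition
    (m n : ℕ) (d : ℕ) (hd : 2 ≤ d)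
    (ω : ℂ) (hω : ω = Complex.exp (2 * Real.pi * I / d))
    (r : ℕ → ℂ)
    (hr : ∀ k, r k = (1 / Real.sqrt 2) *
      Complex.exp (2 * Real.pi * I * (2 * (k : ℂ) - d) / (8 * d)))
    (A : Fin 2 → Matrix (Fin m) (Fin m) ℂ) (B : Fin 2 → Matrix (Fin n) (Fin n) ℂ)
    (hAu : ∀ s, A s ∈ Matrix.unitaryGroup (Fin m) ℂ)
    (hBu : ∀ t, B t ∈ Matrix.unitaryGroup (Fin n) ℂ)
    (hAd : ∀ s, A s ^ d = 1) (hBd : ∀ t, B t ^ d = 1)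
    (C : Fin 2 → ℕ → Matrix (Fin n) (Fin n) ℂ)
    (hC0 : ∀ k, C 0 k = r k • (star (B 0)) ^ k +
      ((starRingEnd ℂ) (r k) * ω ^ k) • (star (B 1)) ^ k)
    (hC1 : ∀ k, C 1 k = (starRingEnd ℂ) (r k) • (star (B 0)) ^ k + r k • (star (B 1)) ^ k)
    (M : Fin 2 → ℕ → Matrix (Fin m × Fin n) (Fin m × Fin n) ℂ)
    (hM : ∀ s k, M s k = (A s ^ k) ⊗ₖ (1 : Matrix (Fin n) (Fin n) ℂ) -
      (1 : Matrix (Fin m) (Fin m) ℂ) ⊗ₖ star (C s k))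
    (Od : Matrix (Fin m × Fin n) (Fin m × Fin n) ℂ)
    (hOd : Od = ∑ k ∈ Finset.Icc 1 (d - 1),
      (r k • ((A 0 ^ k) ⊗ₖ ((star (B 0)) ^ k)) +
       ((starRingEnd ℂ) (r k) * ω ^ k) • ((A 0 ^ k) ⊗ₖ ((star (B 1)) ^ k)) +
       (starRingEnd ℂ) (r k) • ((A 1 ^ k) ⊗ₖ ((star (B 0)) ^ k)) +
       r k • ((A 1 ^ k) ⊗ₖ ((star (B 1)) ^ k)))) :
    Od = (2 * ((d : ℂ) - 1)) • (1 : Matrix (Fin m × Fin n) (Fin m × Fin n) ℂ) -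
        (2 : ℂ)⁻¹ • ∑ k ∈ Finset.Icc 1 (d - 1),
          (M 0 k * star (M 0 k) + M 1 k * star (M 1 k)) ∧
    ∀ ψ : Fin m × Fin n → ℂ, (∑ p, Complex.normSq (ψ p)) = 1 →
      (∑ p, (starRingEnd ℂ) (ψ p) * Od.mulVec ψ p).re ≤ 2 * ((d : ℝ) - 1) ∧
      ((∑ p, (starRingEnd ℂ) (ψ p) * Od.mulVec ψ p) = 2 * ((d : ℂ) - 1) ↔
        ∀ s : Fin 2, ∀ k, 1 ≤ k → k ≤ d - 1 → (star (M s k)).mulVec ψ = 0) := by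
  have hBstar : ∀ t : Fin 2, star (B t) ∈ Matrix.unitaryGroup (Fin n) ℂ :=
    fun t => Unitary.star_mem (hBu t)
  have hBstard : ∀ t : Fin 2, (star (B t)) ^ d = 1 := fun t => by
    rw [← star_pow, hBd t, star_one]
  set T : ℕ → Matrix (Fin m × Fin n) (Fin m × Fin n) ℂ := fun k =>
      r k • ((A 0 ^ k) ⊗ₖ ((star (B 0)) ^ k)) +
      ((starRingEnd ℂ) (r k) * ω ^ k) • ((A 0 ^ k) ⊗ₖ ((star (B 1)) ^ k)) +
      (starRingEnd ℂ) (r k) • ((A 1 ^ k) ⊗ₖ ((star (B 0)) ^ k)) +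
      r k • ((A 1 ^ k) ⊗ₖ ((star (B 1)) ^ k)) with hT
  have hOd' : Od = ∑ k ∈ Finset.Icc 1 (d - 1), T k := hOd
  -- per-k sum-of-squares identity
  have hWk : ∀ k ∈ Finset.Icc 1 (d - 1),
      M 0 k * star (M 0 k) + M 1 k * star (M 1 k) =
        (4 : ℂ) • (1 : Matrix (Fin m × Fin n) (Fin m × Fin n) ℂ) - T k - star (T k) := by
    intro k _
    have hPB0 : B 0 ^ k * (star (B 0)) ^ k = 1 := by
      simpa [star_pow, star_star] using (pow_star_mul_self (hBstar 0) k).2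
    have hPB1 : B 1 ^ k * (star (B 1)) ^ k = 1 := by
      simpa [star_pow, star_star] using (pow_star_mul_self (hBstar 1) k).2
    have hσ : star ω ^ k * ω ^ k = 1 := by
      rw [← mul_pow, star_omega_mul hω, one_pow]
    have h2 := star_r_mul_r hr k
    have hk0 := key0 hd hω hr k
    have hk1 := key1 hd hω hr k
    have hCC : star (C 0 k) * C 0 k + star (C 1 k) * C 1 k =
        (2 : ℂ) • (1 : Matrix (Fin n) (Fin n) ℂ) := by
      rw [hC0 k, hC1 k]
      simp only [star_add, star_smul, star_mul', star_pow, star_star, starRingEnd_apply,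
        add_mul, mul_add, smul_mul_assoc, mul_smul_comm, smul_smul, hPB0, hPB1]
      match_scalars
      · linear_combination 4 * h2 + (star (r k) * r k) * hσ
      · linear_combination hk1
      · linear_combination hk0
    have hMs : ∀ s : Fin 2, M s k * star (M s k) =
        1 + (1 : Matrix (Fin m) (Fin m) ℂ) ⊗ₖ (star (C s k) * C s k)
          - ((A s ^ k) ⊗ₖ C s k) - star ((A s ^ k) ⊗ₖ C s k) := by
      intro s
      rw [hM s k, star_sub, kron_star, kron_star, kron_star, star_one, star_star]
      rw [sub_mul, mul_sub, mul_sub, ← Matrix.mul_kronecker_mul, ← Matrix.mul_kronecker_mul,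
        ← Matrix.mul_kronecker_mul, ← Matrix.mul_kronecker_mul, (pow_star_mul_self (hAu s) k).1]
      simp only [star_one, star_star, one_mul, mul_one, Matrix.one_kronecker_one]
      abel
    have hTk : T k = (A 0 ^ k) ⊗ₖ C 0 k + (A 1 ^ k) ⊗ₖ C 1 k := by
      rw [hC0 k, hC1 k, Matrix.kronecker_add, Matrix.kronecker_add, Matrix.kronecker_smul,
        Matrix.kronecker_smul, Matrix.kronecker_smul, Matrix.kronecker_smul, hT]
      abel
    have hE : (1 : Matrix (Fin m) (Fin m) ℂ) ⊗ₖ (star (C 0 k) * C 0 k)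
        + (1 : Matrix (Fin m) (Fin m) ℂ) ⊗ₖ (star (C 1 k) * C 1 k)
        = (2 : ℂ) • (1 : Matrix (Fin m × Fin n) (Fin m × Fin n) ℂ) := by
      rw [← Matrix.kronecker_add, hCC, Matrix.kronecker_smul, Matrix.one_kronecker_one]
    rw [hMs 0, hMs 1, hTk, star_add,
      show (4 : ℂ) • (1 : Matrix (Fin m × Fin n) (Fin m × Fin n) ℂ)
        = 1 + 1 + (2 : ℂ) • (1 : Matrix (Fin m × Fin n) (Fin m × Fin n) ℂ) from by module,
      ← hE]
    abel
  -- self-adjointness of each summand under k ↦ d - k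
  have hstarT : ∀ k ∈ Finset.Icc 1 (d - 1), star (T k) = T (d - k) := by
    intro k hk
    obtain ⟨hk1, hk2⟩ := Finset.mem_Icc.mp hk
    have hkd : k ≤ d := by omega
    have eA0 : star (A 0 ^ k) = A 0 ^ (d - k) := star_pow_eq_pow_sub (hAu 0) (hAd 0) hkd
    have eA1 : star (A 1 ^ k) = A 1 ^ (d - k) := star_pow_eq_pow_sub (hAu 1) (hAd 1) hkd
    have fB0 : star ((star (B 0)) ^ k) = (star (B 0)) ^ (d - k) :=
      star_pow_eq_pow_sub (hBstar 0) (hBstard 0) hkd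
    have fB1 : star ((star (B 1)) ^ k) = (star (B 1)) ^ (d - k) :=
      star_pow_eq_pow_sub (hBstar 1) (hBstard 1) hkd
    have s1 : star (r k) = r (d - k) := (r_sub hr k hkd).symm
    have s3 : star ((starRingEnd ℂ) (r k)) = (starRingEnd ℂ) (r (d - k)) := by
      simp only [starRingEnd_apply, star_star, r_sub hr k hkd]
    have s2 : star ((starRingEnd ℂ) (r k) * ω ^ k) = (starRingEnd ℂ) (r (d - k)) * ω ^ (d - k) := by
      rw [star_mul', star_pow, star_omega_pow hd hω hkd, starRingEnd_apply, starRingEnd_apply,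
        star_star, r_sub hr k hkd, star_star]
    simp only [hT]
    rw [star_add, star_add, star_add, star_smul, star_smul, star_smul, star_smul,
      kron_star, kron_star, kron_star, kron_star, eA0, eA1, fB0, fB1, s1, s2, s3]
  have hOdstar : star Od = Od := by
    rw [hOd', star_sum, Finset.sum_congr rfl hstarT]
    refine Finset.sum_nbij' (fun k => d - k) (fun k => d - k) ?_ ?_ ?_ ?_ ?_ <;>
      intro a ha <;> simp only [Finset.mem_Icc] at ha ⊢ <;> omega
  have hcard : (Finset.Icc 1 (d - 1)).card = d - 1 := by
    rw [Nat.card_Icc]; omega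
  have hsum : ∑ k ∈ Finset.Icc 1 (d - 1), (M 0 k * star (M 0 k) + M 1 k * star (M 1 k)) =
      (4 * ((d : ℂ) - 1)) • (1 : Matrix (Fin m × Fin n) (Fin m × Fin n) ℂ) - Od - Od := by
    rw [Finset.sum_congr rfl hWk, Finset.sum_sub_distrib, Finset.sum_sub_distrib,
      Finset.sum_const, hcard, ← star_sum, ← hOd', hOdstar]
    congr 2
    rw [← Nat.cast_smul_eq_nsmul ℂ, smul_smul]
    congr 1
    push_cast [Nat.cast_sub (by omega : 1 ≤ d)]
    ring
  have hpart1 : Od = (2 * ((d : ℂ) - 1)) • (1 : Matrix (Fin m × Fin n) (Fin m × Fin n) ℂ) -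
      (2 : ℂ)⁻¹ • ∑ k ∈ Finset.Icc 1 (d - 1),
        (M 0 k * star (M 0 k) + M 1 k * star (M 1 k)) := by
    rw [hsum]
    module
  refine ⟨hpart1, fun ψ hψ => ?_⟩
  classical
  -- inner products with `N * star N` are sums of `normSq`
  have hdot : ∀ N : Matrix (Fin m × Fin n) (Fin m × Fin n) ℂ,
      star ψ ⬝ᵥ ((N * star N) *ᵥ ψ) =
        ((∑ q, Complex.normSq ((star N *ᵥ ψ) q) : ℝ) : ℂ) := by
    intro N
    rw [← Matrix.mulVec_mulVec, Matrix.dotProduct_mulVec]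
    have h1 : star ψ ᵥ* N = star (star N *ᵥ ψ) := by
      rw [Matrix.star_mulVec, Matrix.star_eq_conjTranspose, Matrix.conjTranspose_conjTranspose]
    rw [h1]
    push_cast
    refine Finset.sum_congr rfl fun q _ => ?_
    rw [Pi.star_apply, Complex.normSq_eq_conj_mul_self, starRingEnd_apply]
  have hψ1 : star ψ ⬝ᵥ ψ = 1 := by
    have : star ψ ⬝ᵥ ψ = ((∑ p, Complex.normSq (ψ p) : ℝ) : ℂ) := by
      push_cast
      refine Finset.sum_congr rfl fun p _ => ?_
      rw [Pi.star_apply, Complex.normSq_eq_conj_mul_self, starRingEnd_apply]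
    rw [this, hψ]
    norm_num
  set g : Fin 2 → ℕ → ℝ := fun s k => ∑ q, Complex.normSq ((star (M s k) *ᵥ ψ) q) with hg
  have hgnn : ∀ s k, 0 ≤ g s k := fun s k => Finset.sum_nonneg fun q _ => Complex.normSq_nonneg _
  set S : ℝ := ∑ k ∈ Finset.Icc 1 (d - 1), (g 0 k + g 1 k) with hSdef
  have hSnn : 0 ≤ S := Finset.sum_nonneg fun k _ => add_nonneg (hgnn 0 k) (hgnn 1 k)
  have hF : (∑ p, (starRingEnd ℂ) (ψ p) * Od.mulVec ψ p) =
      ((2 * ((d : ℝ) - 1) - 2⁻¹ * S : ℝ) : ℂ) := by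
    have h0 : (∑ p, (starRingEnd ℂ) (ψ p) * Od.mulVec ψ p) = star ψ ⬝ᵥ (Od *ᵥ ψ) := by
      simp only [dotProduct, Pi.star_apply, starRingEnd_apply]
    rw [h0, hpart1, Matrix.sub_mulVec, Matrix.smul_mulVec, Matrix.one_mulVec,
      Matrix.smul_mulVec, _root_.sum_mulVec, dotProduct_sub, dotProduct_smul, dotProduct_smul,
      hψ1, dotProduct_sum']
    have hterm : ∀ k ∈ Finset.Icc 1 (d - 1),
        star ψ ⬝ᵥ ((M 0 k * star (M 0 k) + M 1 k * star (M 1 k)) *ᵥ ψ) =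
          (((g 0 k + g 1 k) : ℝ) : ℂ) := by
      intro k _
      rw [Matrix.add_mulVec, dotProduct_add, hdot (M 0 k), hdot (M 1 k), hg]
      push_cast
      ring
    rw [Finset.sum_congr rfl hterm, hSdef]
    push_cast
    simp only [smul_eq_mul]
    ring
  constructor
  · rw [hF, Complex.ofReal_re]
    linarith
  · have hRHS : (2 * ((d : ℂ) - 1)) = ((2 * ((d : ℝ) - 1) : ℝ) : ℂ) := by push_cast; ring
    rw [hF, hRHS]
    rw [Complex.ofReal_inj]
    constructor
    · intro h
      have hS0 : S = 0 := by linarith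
      have hzero : ∀ k ∈ Finset.Icc 1 (d - 1), g 0 k + g 1 k = 0 :=
        (Finset.sum_eq_zero_iff_of_nonneg
          (fun k _ => add_nonneg (hgnn 0 k) (hgnn 1 k))).mp hS0
      intro s k hk1 hk2
      have hkmem : k ∈ Finset.Icc 1 (d - 1) := Finset.mem_Icc.mpr ⟨hk1, hk2⟩
      have hz := hzero k hkmem
      have hgz : g s k = 0 := by
        have h0 := hgnn 0 k
        have h1 := hgnn 1 k
        have hboth : g 0 k = 0 ∧ g 1 k = 0 := ⟨by linarith, by linarith⟩
        fin_cases s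
        · exact hboth.1
        · exact hboth.2
      have := (Finset.sum_eq_zero_iff_of_nonneg
        (fun q _ => Complex.normSq_nonneg ((star (M s k) *ᵥ ψ) q))).mp hgz
      funext q
      have hq := this q (Finset.mem_univ q)
      exact Complex.normSq_eq_zero.mp hq
    · intro h
      have hS0 : S = 0 := by
        rw [hSdef]
        refine Finset.sum_eq_zero fun k hk => ?_
        obtain ⟨hk1, hk2⟩ := Finset.mem_Icc.mp hk
        have h0 : g 0 k = 0 := by simp only [hg]; rw [h 0 k hk1 hk2]; simp
        have h1 : g 1 k = 0 := by simp only [hg]; rw [h 1 k hk1 hk2]; simp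
        rw [h0, h1, add_zero]
      rw [hS0]
      ring
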